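/- (Simplex bound) For any packing of N distinct n-dimensional subspaces P₁,…,P_N of R^m, the minimum squared chordal distance satisfies min_{i≠j} d_c²(P_i,P_j) ≤ (n(m−n)/m)·(N/(N−1)). -/

import Mathlib

open Matrix

/-- Simplex bound: for any packing of `N` distinct `n`-dimensional subspaces of
`ℝ^m` (given by their orthogonal projection matrices), some pair has squared
chordal distance at most `(n(m-n)/m) · N/(N-1)`. -/
theorem simplex_bound {m n N : ℕ} (hN : 2 ≤ N)
    (P : Fin N → Matrix (Fin m) (Fin m) ℝ)
    (hsym : ∀ k, (P k)ᵀ = P k) (hidem : ∀ k, P k * P k = P k)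
    (htr : ∀ k, Matrix.trace (P k) = (n : ℝ)) (hinj : Function.Injective P) :
    ∃ i j, i ≠ j ∧
      (n : ℝ) - Matrix.trace (P i * P j) ≤
        ((n : ℝ) * ((m : ℝ) - n) / m) * ((N : ℝ) / ((N : ℝ) - 1)) := by
  have hN1 : (1:ℝ) < (N:ℝ) := by exact_mod_cast Nat.lt_of_lt_of_le one_lt_two hN
  rcases Nat.eq_zero_or_pos m with hm0 | hm
  · subst hm0
    exfalso
    have h01 : (⟨0, by omega⟩ : Fin N) ≠ ⟨1, by omega⟩ := by simp
    exact h01 (hinj (Subsingleton.elim _ _))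
  have hmR : (0:ℝ) < (m:ℝ) := by exact_mod_cast hm
  -- key positivity lemma
  have key : ∀ T : Matrix (Fin m) (Fin m) ℝ, Tᵀ = T → 0 ≤ Matrix.trace (T * T) := by
    intro T hT
    have hTT : Matrix.trace (T * T) = ∑ i, ∑ j, T i j * T i j := by
      rw [Matrix.trace]
      simp only [Matrix.diag, Matrix.mul_apply]
      refine Finset.sum_congr rfl fun i _ => Finset.sum_congr rfl fun j _ => ?_
      have h2 : T i j = T j i := by
        have := congrFun (congrFun hT j) i
        simpa [Matrix.transpose_apply] using this
      rw [← h2]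
    rw [hTT]
    exact Finset.sum_nonneg fun i _ => Finset.sum_nonneg fun j _ => mul_self_nonneg _
  set S : Matrix (Fin m) (Fin m) ℝ := ∑ k, P k with hS
  have hSsym : Sᵀ = S := by
    rw [hS, Matrix.transpose_sum]
    exact Finset.sum_congr rfl fun k _ => hsym k
  have htrS : Matrix.trace S = (N:ℝ) * n := by
    rw [hS, Matrix.trace_sum]
    simp [htr, Finset.sum_const, Finset.card_univ, mul_comm]
  set c : ℝ := (N:ℝ) * n / m with hc
  have hTsym : (S - c • (1 : Matrix (Fin m) (Fin m) ℝ))ᵀ = S - c • 1 := by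
    rw [Matrix.transpose_sub, hSsym, Matrix.transpose_smul, Matrix.transpose_one]
  have hpos := key _ hTsym
  have hexp : Matrix.trace ((S - c • (1 : Matrix (Fin m) (Fin m) ℝ)) * (S - c • 1))
      = Matrix.trace (S * S) - 2 * c * ((N:ℝ) * n) + c^2 * m := by
    simp only [sub_mul, mul_sub, Matrix.smul_mul, Matrix.mul_smul, Matrix.one_mul,
      Matrix.mul_one, smul_smul, Matrix.trace_sub, Matrix.trace_smul, Matrix.trace_one,
      htrS, smul_eq_mul, Fintype.card_fin]
    have hm0 : (m:ℝ) ≠ 0 := ne_of_gt hmR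
    rw [hc]
    field_simp
    ring
  have hSS : ((N:ℝ) * n)^2 / m ≤ Matrix.trace (S * S) := by
    rw [hexp, hc] at hpos
    have hm0 : (m:ℝ) ≠ 0 := ne_of_gt hmR
    have e1 : 2 * ((N:ℝ)*n/m) * ((N:ℝ)*n) = 2 * (((N:ℝ)*n)^2/m) := by field_simp
    have e2 : ((N:ℝ)*n/m)^2 * m = ((N:ℝ)*n)^2/m := by field_simp
    rw [e1, e2] at hpos
    linarith
  have hSSsum : Matrix.trace (S * S) = ∑ i, ∑ j, Matrix.trace (P i * P j) := by
    rw [hS, Finset.sum_mul_sum]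
    rw [Matrix.trace_sum]
    exact Finset.sum_congr rfl fun i _ => by rw [Matrix.trace_sum]
  by_contra hcon
  push_neg at hcon
  set B : ℝ := ((n : ℝ) * ((m : ℝ) - n) / m) * ((N : ℝ) / ((N : ℝ) - 1)) with hB
  have hlt : ∀ p ∈ (Finset.univ : Finset (Fin N)).offDiag,
      Matrix.trace (P p.1 * P p.2) < (n:ℝ) - B := by
    intro p hp
    rw [Finset.mem_offDiag] at hp
    have := hcon p.1 p.2 hp.2.2
    linarith
  have hne : ((Finset.univ : Finset (Fin N)).offDiag).Nonempty := by
    refine ⟨(⟨0, by omega⟩, ⟨1, by omega⟩), ?_⟩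
    rw [Finset.mem_offDiag]
    exact ⟨Finset.mem_univ _, Finset.mem_univ _, by simp⟩
  have hsum_lt := Finset.sum_lt_sum_of_nonempty hne hlt
  rw [Finset.sum_const] at hsum_lt
  have hcard : ((Finset.univ : Finset (Fin N)).offDiag).card = N * N - N := by
    rw [Finset.offDiag_card, Finset.card_univ, Fintype.card_fin]
  rw [hcard] at hsum_lt
  -- relate offdiag sum to full sum
  have hsplit : (∑ p ∈ (Finset.univ : Finset (Fin N)).offDiag, Matrix.trace (P p.1 * P p.2))
      = Matrix.trace (S * S) - (N:ℝ) * n := by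
    have hu : (Finset.univ : Finset (Fin N)).diag ∪ (Finset.univ : Finset (Fin N)).offDiag
        = Finset.univ ×ˢ Finset.univ := Finset.diag_union_offDiag _
    have hdisj := Finset.disjoint_diag_offDiag (Finset.univ : Finset (Fin N))
    have := Finset.sum_union hdisj (f := fun p : Fin N × Fin N => Matrix.trace (P p.1 * P p.2))
    rw [hu] at this
    have hprod : ∑ p ∈ Finset.univ ×ˢ Finset.univ, Matrix.trace (P p.1 * P p.2)
        = ∑ i, ∑ j, Matrix.trace (P i * P j) := by
      rw [Finset.sum_product]
    rw [hprod, ← hSSsum] at this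
    have hdiag : (∑ p ∈ (Finset.univ : Finset (Fin N)).diag, Matrix.trace (P p.1 * P p.2))
        = (N:ℝ) * n := by
      rw [Finset.sum_diag]
      simp only [hidem, htr]
      simp [Finset.sum_const, Finset.card_univ, mul_comm]
    rw [hdiag] at this
    linarith
  rw [hsplit] at hsum_lt
  -- final contradiction
  have hNcast : ((N * N - N : ℕ) : ℝ) = (N:ℝ) * N - N := by
    have : N ≤ N * N := Nat.le_mul_of_pos_left N (by omega)
    push_cast [Nat.cast_sub this]
    ring
  rw [nsmul_eq_mul, hNcast] at hsum_lt
  have hNe : (N:ℝ) - 1 ≠ 0 := by linarith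
  have hm0 : (m:ℝ) ≠ 0 := ne_of_gt hmR
  have hkey : ((N:ℝ) * N - N) * ((n:ℝ) - B) = ((N:ℝ) * n)^2 / m - (N:ℝ) * n := by
    rw [hB]
    field_simp
    ring
  rw [hkey] at hsum_lt
  linarith
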